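/- (Accuracy of the compressive dictionary update, Theorem 2.) Let (Ω, ℱ, ℙ) be a probability space and ε ∈ [0, 1], μ₁ > 0. Let ḡ : ℝ^q → ℝ be a fixed quadratic function, nonnegative on ℝ^q, with global minimizer d* ∈ ℝ^q. For each ω ∈ Ω let g_ω(d) = ½ d^T Q_ω d + f_ω^T d + c_ω be a (measurably chosen) quadratic function, nonnegative on ℝ^q, with symmetric Hessian Q_ω, let d̂(ω) be a global minimizer of g_ω, and assume d̂, ω ↦ g_ω(d*) and ω ↦ g_ω(d̂(ω)) are measurable and integrable. Assume: (i) λ_min(Q_ω) ≥ μ₁ almost surely; (ii) almost surely, (1−ε) ḡ(d̂(ω)) ≤ g_ω(d̂(ω)) ≤ (1+ε) ḡ(d̂(ω)) and (1−ε) ḡ(d*) ≤ g_ω(d*) ≤ (1+ε) ḡ(d*); (iii) 𝔼[g_ω(d*)] = ḡ(d*). Then 𝔼[ ‖d̂ − d*‖₂² ] ≤ (2ε/μ₁) ḡ(d*). -/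

import Mathlib

open Matrix MeasureTheory

noncomputable def lamMin {k : Type*} [Fintype k] (A : Matrix k k ℝ) : ℝ :=
  sInf {t : ℝ | ∃ v : k → ℝ, v ≠ 0 ∧ A.mulVec v = t • v}

lemma lamMin_bddBelow {k : Type*} [Fintype k] (A : Matrix k k ℝ) :
    BddBelow {t : ℝ | ∃ v : k → ℝ, v ≠ 0 ∧ A.mulVec v = t • v} := by
  classical
  set T := LinearMap.toContinuousLinearMap (Matrix.mulVecLin A)
  refine ⟨-‖T‖, fun t ht => ?_⟩
  obtain ⟨v, hv, hAv⟩ := ht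
  have hnorm : ‖A.mulVec v‖ ≤ ‖T‖ * ‖v‖ := T.le_opNorm v
  rw [hAv, norm_smul, Real.norm_eq_abs] at hnorm
  have hv0 : 0 < ‖v‖ := norm_pos_iff.mpr hv
  have : |t| ≤ ‖T‖ := le_of_mul_le_mul_right hnorm hv0
  linarith [neg_abs_le t]

lemma quadform_lower {k : Type*} [Fintype k] [DecidableEq k] {A : Matrix k k ℝ} (hA : A.IsSymm)
    {μ : ℝ} (hμ : μ ≤ lamMin A) (v : k → ℝ) :
    μ * (v ⬝ᵥ v) ≤ v ⬝ᵥ A.mulVec v := by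
  have hAh : A.IsHermitian := by
    rwa [Matrix.IsHermitian, conjTranspose_eq_transpose_of_trivial]
  set B := A - μ • (1 : Matrix k k ℝ) with hB
  have hBh : B.IsHermitian := by
    simp [Matrix.IsHermitian, Matrix.conjTranspose_sub, Matrix.conjTranspose_smul, hAh.eq, hB, hA.eq]
  have heigs : ∀ i, 0 ≤ hBh.eigenvalues i := by
    intro i
    have hw0 : (⇑(hBh.eigenvectorBasis i) : k → ℝ) ≠ 0 := by
      intro h
      exact hBh.eigenvectorBasis.orthonormal.ne_zero i (by ext x; exact congrFun h x)
    have hev := hBh.mulVec_eigenvectorBasis i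
    have hAv : A.mulVec (⇑(hBh.eigenvectorBasis i)) =
        (hBh.eigenvalues i + μ) • (⇑(hBh.eigenvectorBasis i)) := by
      have : A = B + μ • (1 : Matrix k k ℝ) := by rw [hB, sub_add_cancel]
      rw [this, Matrix.add_mulVec, hev, Matrix.smul_mulVec, Matrix.one_mulVec,
        add_smul]
    have hmem : hBh.eigenvalues i + μ ∈
        {t : ℝ | ∃ v : k → ℝ, v ≠ 0 ∧ A.mulVec v = t • v} :=
      ⟨_, hw0, hAv⟩
    have := csInf_le (lamMin_bddBelow A) hmem
    have h2 : μ ≤ sInf {t : ℝ | ∃ v : k → ℝ, v ≠ 0 ∧ A.mulVec v = t • v} := hμ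
    linarith
  have hPSD := hBh.posSemidef_iff_eigenvalues_nonneg.mpr (fun i => heigs i)
  have h := hPSD.dotProduct_mulVec_nonneg v
  have hstar : star v = v := by ext i; simp
  rw [hstar] at h
  have hBv : B.mulVec v = A.mulVec v - μ • v := by
    rw [hB, Matrix.sub_mulVec, Matrix.smul_mulVec, Matrix.one_mulVec]
  rw [hBv, dotProduct_sub, dotProduct_smul, smul_eq_mul] at h
  linarith

noncomputable def quadObj {q : ℕ} (Q : Matrix (Fin q) (Fin q) ℝ)
    (f : Fin q → ℝ) (c : ℝ) (d : Fin q → ℝ) : ℝ :=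
  (1 / 2) * (d ⬝ᵥ Q.mulVec d) + f ⬝ᵥ d + c

lemma quad_expand {q : ℕ} (Q : Matrix (Fin q) (Fin q) ℝ) (f : Fin q → ℝ) (c : ℝ)
    (hs : Q.IsSymm) (x v : Fin q → ℝ) (t : ℝ) :
    quadObj Q f c (x + t • v) = quadObj Q f c x
      + t * (x ⬝ᵥ Q.mulVec v + f ⬝ᵥ v) + t ^ 2 * ((v ⬝ᵥ Q.mulVec v) / 2) := by
  have hsym : v ⬝ᵥ Q.mulVec x = x ⬝ᵥ Q.mulVec v := by
    rw [Matrix.dotProduct_mulVec, ← Matrix.mulVec_transpose, hs.eq, dotProduct_comm]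
  simp only [quadObj, Matrix.mulVec_add, Matrix.mulVec_smul, dotProduct_add, add_dotProduct,
    dotProduct_smul, smul_dotProduct, smul_eq_mul, hsym]
  ring

lemma key_pointwise {q : ℕ} (Q : Matrix (Fin q) (Fin q) ℝ) (f : Fin q → ℝ) (c : ℝ)
    (hs : Q.IsSymm) {μ : ℝ} (hμ : μ ≤ lamMin Q)
    (x y : Fin q → ℝ) (hmin : ∀ d, quadObj Q f c x ≤ quadObj Q f c d) :
    μ / 2 * ∑ i, (x i - y i) ^ 2 ≤ quadObj Q f c y - quadObj Q f c x := by
  set v := y - x with hv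
  set L := x ⬝ᵥ Q.mulVec v + f ⬝ᵥ v with hL
  set B := v ⬝ᵥ Q.mulVec v with hBdef
  have hquad : ∀ t : ℝ, 0 ≤ t * L + t ^ 2 * (B / 2) := by
    intro t
    have h := hmin (x + t • v)
    rw [quad_expand Q f c hs x v t] at h
    linarith
  have hvv : v ⬝ᵥ v = ∑ i, (x i - y i) ^ 2 := by
    simp only [dotProduct, hv, Pi.sub_apply]
    exact Finset.sum_congr rfl fun i _ => by ring
  have hBlow : μ * (v ⬝ᵥ v) ≤ B := quadform_lower hs hμ v
  have hvvnn : 0 ≤ v ⬝ᵥ v := by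
    rw [hvv]; exact Finset.sum_nonneg fun i _ => sq_nonneg _
  have hBnn : 0 ≤ B := by nlinarith [hquad 1, hquad (-1)]
  have hL0 : 0 ≤ L := by
    rcases eq_or_lt_of_le hBnn with hB0 | hBpos
    · linarith [hquad 1]
    · have h := hquad (-L / B)
      have hBne : (2 * B : ℝ) ≠ 0 := by positivity
      have he : (-L / B) * L + (-L / B) ^ 2 * (B / 2) = -(L ^ 2) / (2 * B) := by
        field_simp
        ring
      rw [he] at h
      have h3 := mul_nonneg h (by positivity : (0:ℝ) ≤ 2 * B)
      rw [div_mul_cancel₀ _ hBne] at h3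
      nlinarith [sq_nonneg L]
  have hexp := quad_expand Q f c hs x v 1
  have hxy : x + (1 : ℝ) • v = y := by
    ext i; simp [hv]
  rw [hxy] at hexp
  rw [← hvv]
  nlinarith

/-- Accuracy of the compressive dictionary update (Theorem 2):
`𝔼 ‖d̂ - d*‖₂² ≤ (2ε/μ₁) ḡ(d*)`. -/
theorem compressive_update_accuracy
    {Ω : Type*} [MeasurableSpace Ω] (P : Measure Ω) [IsProbabilityMeasure P]
    (q : ℕ) (ε μ₁ : ℝ) (hε0 : 0 ≤ ε) (hε1 : ε ≤ 1) (hμ₁ : 0 < μ₁)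
    -- the fixed full-data quadratic objective `ḡ` and its minimizer `d*`
    (Qb : Matrix (Fin q) (Fin q) ℝ) (fb : Fin q → ℝ) (cb : ℝ) (dstar : Fin q → ℝ)
    (hgb_nonneg : ∀ d, 0 ≤ quadObj Qb fb cb d)
    (hgb_min : ∀ d, quadObj Qb fb cb dstar ≤ quadObj Qb fb cb d)
    -- the random compressive quadratic objective `g_ω` and its minimizer `d̂(ω)`
    (Q : Ω → Matrix (Fin q) (Fin q) ℝ) (f : Ω → Fin q → ℝ) (c : Ω → ℝ)
    (hQsymm : ∀ ω, (Q ω).IsSymm)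
    (hQmeas : ∀ i j, Measurable fun ω => Q ω i j)
    (hfmeas : Measurable f) (hcmeas : Measurable c)
    (hg_nonneg : ∀ ω d, 0 ≤ quadObj (Q ω) (f ω) (c ω) d)
    (dhat : Ω → Fin q → ℝ)
    (hg_min : ∀ ω d, quadObj (Q ω) (f ω) (c ω) (dhat ω) ≤ quadObj (Q ω) (f ω) (c ω) d)
    -- measurability and integrability
    (hdhat_meas : Measurable dhat)
    (hdhat_int : Integrable dhat P)
    (hint_star : Integrable (fun ω => quadObj (Q ω) (f ω) (c ω) dstar) P)
    (hint_hat : Integrable (fun ω => quadObj (Q ω) (f ω) (c ω) (dhat ω)) P)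
    -- (i) eigenvalue lower bound
    (heig : ∀ᵐ ω ∂P, μ₁ ≤ lamMin (Q ω))
    -- (ii) multiplicative concentration at `d̂(ω)` and at `d*`
    (hsand : ∀ᵐ ω ∂P,
      ((1 - ε) * quadObj Qb fb cb (dhat ω) ≤ quadObj (Q ω) (f ω) (c ω) (dhat ω) ∧
        quadObj (Q ω) (f ω) (c ω) (dhat ω) ≤ (1 + ε) * quadObj Qb fb cb (dhat ω)) ∧
      ((1 - ε) * quadObj Qb fb cb dstar ≤ quadObj (Q ω) (f ω) (c ω) dstar ∧
        quadObj (Q ω) (f ω) (c ω) dstar ≤ (1 + ε) * quadObj Qb fb cb dstar))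
    -- (iii) unbiasedness at `d*`
    (hunbias : ∫ ω, quadObj (Q ω) (f ω) (c ω) dstar ∂P = quadObj Qb fb cb dstar) :
    ∫ ω, ∑ i, (dhat ω i - dstar i) ^ 2 ∂P ≤ (2 * ε / μ₁) * quadObj Qb fb cb dstar := by
  set F : Ω → ℝ := fun ω => ∑ i, (dhat ω i - dstar i) ^ 2 with hF
  set G : Ω → ℝ := fun ω =>
    2 / μ₁ * (quadObj (Q ω) (f ω) (c ω) dstar - quadObj (Q ω) (f ω) (c ω) (dhat ω)) with hG
  have hFnn : ∀ ω, 0 ≤ F ω := fun ω => Finset.sum_nonneg fun i _ => sq_nonneg _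
  have hkey : ∀ᵐ ω ∂P, F ω ≤ G ω := by
    filter_upwards [heig] with ω hω
    have h := key_pointwise (Q ω) (f ω) (c ω) (hQsymm ω) hω (dhat ω) dstar (hg_min ω)
    have h2 : 2 / μ₁ * (μ₁ / 2 * F ω) = F ω := by field_simp
    calc F ω = 2 / μ₁ * (μ₁ / 2 * F ω) := h2.symm
      _ ≤ G ω := mul_le_mul_of_nonneg_left h (by positivity)
  have hFmeas : Measurable F := by
    apply Finset.measurable_sum
    intro i _
    exact (((measurable_pi_apply i).comp hdhat_meas).sub measurable_const).pow_const 2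
  have hGint : Integrable G P := (hint_star.sub hint_hat).const_mul _
  have hFint : Integrable F P := by
    refine hGint.mono' hFmeas.aestronglyMeasurable ?_
    filter_upwards [hkey] with ω hω
    rwa [Real.norm_of_nonneg (hFnn ω)]
  have hIF : ∫ ω, F ω ∂P ≤ ∫ ω, G ω ∂P := integral_mono_ae hFint hGint hkey
  have hIG : ∫ ω, G ω ∂P
      = 2 / μ₁ * (quadObj Qb fb cb dstar - ∫ ω, quadObj (Q ω) (f ω) (c ω) (dhat ω) ∂P) := by
    rw [hG]
    rw [integral_const_mul, integral_sub hint_star hint_hat, hunbias]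
  have hlow : (1 - ε) * quadObj Qb fb cb dstar
      ≤ ∫ ω, quadObj (Q ω) (f ω) (c ω) (dhat ω) ∂P := by
    have hptw : ∀ᵐ ω ∂P, (1 - ε) * quadObj Qb fb cb dstar
        ≤ quadObj (Q ω) (f ω) (c ω) (dhat ω) := by
      filter_upwards [hsand] with ω hs
      refine le_trans ?_ hs.1.1
      exact mul_le_mul_of_nonneg_left (hgb_min _) (by linarith)
    have := integral_mono_ae (integrable_const ((1 - ε) * quadObj Qb fb cb dstar)) hint_hat hptw
    simpa using this
  have hfin : 2 / μ₁ * (quadObj Qb fb cb dstar - ∫ ω, quadObj (Q ω) (f ω) (c ω) (dhat ω) ∂P)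
      ≤ (2 * ε / μ₁) * quadObj Qb fb cb dstar := by
    have h1 : quadObj Qb fb cb dstar - ∫ ω, quadObj (Q ω) (f ω) (c ω) (dhat ω) ∂P
        ≤ ε * quadObj Qb fb cb dstar := by linarith
    calc 2 / μ₁ * (quadObj Qb fb cb dstar - ∫ ω, quadObj (Q ω) (f ω) (c ω) (dhat ω) ∂P)
        ≤ 2 / μ₁ * (ε * quadObj Qb fb cb dstar) := mul_le_mul_of_nonneg_left h1 (by positivity)
      _ = (2 * ε / μ₁) * quadObj Qb fb cb dstar := by ring
  calc ∫ ω, F ω ∂P ≤ ∫ ω, G ω ∂P := hIF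
    _ ≤ (2 * ε / μ₁) * quadObj Qb fb cb dstar := hIG ▸ hfin
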